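/- Let p ≥ 1, let H : ℝ^d → ℝ be (p+1) times continuously differentiable, and let ∇̄H : ℝ^d × ℝ^d → ℝ^d satisfy the discrete gradient condition with y ↦ ∇̄H(x,y) p times continuously differentiable. Define Q(x,y) = ½((D₂∇̄H(x,y))ᵀ − D₂∇̄H(x,y)). Then for every integer κ with 1 ≤ κ ≤ p and all x, v ∈ ℝ^d, D₂^κ∇̄H(x,x)(v,…,v) = (1/(κ+1)) D^κ∇H(x)(v,…,v) − (2κ/(κ+1)) D₂^{κ−1}Q(x,x)(v,…,v), where D₂^κ∇̄H(x,x)(v,…,v) ∈ ℝ^d is the κ-th derivative of y ↦ ∇̄H(x,y) at y = x evaluated at κ copies of v, D^κ∇H(x)(v,…,v) ∈ ℝ^d is the κ-th derivative of ∇H at x evaluated at κ copies of v, and D₂^{κ−1}Q(x,x)(v,…,v) ∈ ℝ^d is the (κ−1)-st derivative of y ↦ Q(x,y) at y = x in directions v,…,v, the resulting matrix applied to v. -/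

import Mathlib

open scoped RealInnerProductSpace

/-- The skew-symmetric part `Q(x,y) = ½((D₂∇̄H(x,y))ᵀ − D₂∇̄H(x,y))` of the Jacobian of a
discrete gradient with respect to its second argument (the transpose is the adjoint). -/
noncomputable def dgQ {d : ℕ}
    (dg : EuclideanSpace ℝ (Fin d) → EuclideanSpace ℝ (Fin d) → EuclideanSpace ℝ (Fin d))
    (x y : EuclideanSpace ℝ (Fin d)) :
    EuclideanSpace ℝ (Fin d) →L[ℝ] EuclideanSpace ℝ (Fin d) :=
  (2 : ℝ)⁻¹ • (ContinuousLinearMap.adjoint (fderiv ℝ (dg x) y) - fderiv ℝ (dg x) y)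

section Aux

variable {E F : Type*} [NormedAddCommGroup E] [NormedSpace ℝ E]
  [NormedAddCommGroup F] [NormedSpace ℝ F]

/-- n-th derivative of `f` along a line. -/
lemma iteratedDeriv_line :
    ∀ (n : ℕ) (f : E → F), ContDiff ℝ n f → ∀ (x v : E) (t : ℝ),
      iteratedDeriv n (fun s : ℝ => f (x + s • v)) t
        = iteratedFDeriv ℝ n f (x + t • v) (fun _ => v) := by
  intro n
  induction n with
  | zero => intro f hf x v t; simp
  | succ n ih =>
    intro f hf x v t
    have hfn : ContDiff ℝ n f := hf.of_le (by exact_mod_cast Nat.le_succ n)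
    have hconst : (Fin.cons v (fun _ : Fin n => v) : Fin (n + 1) → E) = fun _ => v := by
      ext i
      refine Fin.cases rfl (fun j => rfl) i
    rw [iteratedDeriv_succ]
    have h1 : iteratedDeriv n (fun s : ℝ => f (x + s • v))
        = fun s : ℝ => ContinuousMultilinearMap.apply ℝ (fun _ : Fin n => E) F (fun _ => v)
            (iteratedFDeriv ℝ n f (x + s • v)) := by
      funext s
      rw [ih f hfn x v s]
      rfl
    rw [h1]
    have hL : HasDerivAt (fun s : ℝ => x + s • v) v t := by
      simpa using ((hasDerivAt_id t).smul_const v).const_add x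
    have hdiff : HasFDerivAt (iteratedFDeriv ℝ n f)
        (fderiv ℝ (iteratedFDeriv ℝ n f) (x + t • v)) (x + t • v) :=
      ((hf.differentiable_iteratedFDeriv (by exact_mod_cast Nat.lt_succ_self n))
        (x + t • v)).hasFDerivAt
    have h2 : HasDerivAt (fun s : ℝ => iteratedFDeriv ℝ n f (x + s • v))
        (fderiv ℝ (iteratedFDeriv ℝ n f) (x + t • v) v) t :=
      hdiff.comp_hasDerivAt t hL
    have h3 := ((ContinuousMultilinearMap.apply ℝ (fun _ : Fin n => E) F
      (fun _ => v)).hasFDerivAt.comp_hasDerivAt t h2).deriv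
    simp only [Function.comp_def] at h3
    rw [h3]
    have h5 : fderiv ℝ (iteratedFDeriv ℝ n f) (x + t • v) v (fun _ => v)
        = iteratedFDeriv ℝ (n + 1) f (x + t • v) (Fin.cons v (fun _ => v)) := rfl
    simp only [ContinuousMultilinearMap.apply_apply, h5, hconst]

lemma hasDerivAt_nsmul_iteratedDeriv (n : ℕ) (u : ℝ → F) (hu : ContDiff ℝ n u) (t : ℝ) :
    HasDerivAt (fun s : ℝ => (n : ℝ) • iteratedDeriv (n - 1) u s)
      ((n : ℝ) • iteratedDeriv n u t) t := by
  rcases Nat.eq_zero_or_pos n with hn | hn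
  · subst hn
    simp only [Nat.cast_zero, zero_smul]
    exact hasDerivAt_const t 0
  · have hd : HasDerivAt (iteratedDeriv (n - 1) u) (iteratedDeriv n u t) t := by
      have hlt : ((n - 1 : ℕ) : WithTop ℕ∞) < (n : ℕ) := by
        exact_mod_cast Nat.sub_lt hn one_pos
      have h5 := ((hu.differentiable_iteratedDeriv (n - 1) hlt) t).hasDerivAt
      have hsucc : n - 1 + 1 = n := Nat.succ_pred_eq_of_pos hn
      rw [← hsucc, iteratedDeriv_succ]
      exact h5
    exact hd.const_smul ((n : ℝ))

/-- Leibniz rule for `s • u s`. -/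
lemma iteratedDeriv_id_smul :
    ∀ (n : ℕ) (u : ℝ → F), ContDiff ℝ n u → ∀ t : ℝ,
      iteratedDeriv n (fun s : ℝ => s • u s) t
        = t • iteratedDeriv n u t + (n : ℝ) • iteratedDeriv (n - 1) u t := by
  intro n
  induction n with
  | zero => intro u hu t; simp
  | succ n ih =>
    intro u hu t
    have hun : ContDiff ℝ n u := hu.of_le (by exact_mod_cast Nat.le_succ n)
    rw [iteratedDeriv_succ]
    have h1 : iteratedDeriv n (fun s : ℝ => s • u s)
        = fun s : ℝ => s • iteratedDeriv n u s + (n : ℝ) • iteratedDeriv (n - 1) u s :=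
      funext (ih u hun)
    rw [h1]
    have hdn : HasDerivAt (iteratedDeriv n u) (iteratedDeriv (n + 1) u t) t := by
      rw [iteratedDeriv_succ]
      exact ((hu.differentiable_iteratedDeriv n
        (by exact_mod_cast Nat.lt_succ_self n)) t).hasDerivAt
    have h2 : HasDerivAt (fun s : ℝ => s • iteratedDeriv n u s)
        (t • iteratedDeriv (n + 1) u t + (1 : ℝ) • iteratedDeriv n u t) t :=
      (hasDerivAt_id' t).smul hdn
    have h3 := hasDerivAt_nsmul_iteratedDeriv n u hun t
    rw [(h2.fun_add h3).deriv]
    simp only [Nat.add_sub_cancel]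
    push_cast
    module

/-- Top-order case, needing one degree less smoothness, at `t = 0`. -/
lemma iteratedDeriv_id_smul_top (n : ℕ) (u : ℝ → F) (hu : ContDiff ℝ n u) :
    iteratedDeriv (n + 1) (fun s : ℝ => s • u s) 0 = ((n : ℝ) + 1) • iteratedDeriv n u 0 := by
  rw [iteratedDeriv_succ, funext (iteratedDeriv_id_smul n u hu)]
  have hw : Filter.Tendsto (iteratedDeriv n u) (nhdsWithin 0 {(0 : ℝ)}ᶜ)
      (nhds (iteratedDeriv n u 0)) :=
    ((hu.continuous_iteratedDeriv n le_rfl).continuousAt).continuousWithinAt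
  have h2 : HasDerivAt (fun s : ℝ => s • iteratedDeriv n u s) (iteratedDeriv n u 0) 0 := by
    rw [hasDerivAt_iff_tendsto_slope]
    refine hw.congr' ?_
    filter_upwards [self_mem_nhdsWithin] with s hs
    have hs0 : s ≠ 0 := hs
    simp [slope, hs0, smul_smul, inv_mul_cancel₀]
  have h3 := hasDerivAt_nsmul_iteratedDeriv n u hu 0
  rw [(h2.fun_add h3).deriv]
  module

lemma iteratedDeriv_sub_aux {n : ℕ} {f g : ℝ → F} (hf : ContDiff ℝ n f) (hg : ContDiff ℝ n g)
    (t : ℝ) :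
    iteratedDeriv n (fun s => f s - g s) t = iteratedDeriv n f t - iteratedDeriv n g t := by
  simp only [iteratedDeriv_eq_iteratedFDeriv]
  rw [show (fun s => f s - g s) = fun s => f s + (-g) s from funext fun s => by
    simp [sub_eq_add_neg]]
  rw [iteratedFDeriv_add_apply' hf.contDiffAt (by exact hg.neg.contDiffAt), iteratedFDeriv_neg_apply]
  simp [sub_eq_add_neg]

end Aux

section Adj

variable (E : Type*) [NormedAddCommGroup E] [InnerProductSpace ℝ E] [CompleteSpace E]

/-- The adjoint on endomorphisms of a real Hilbert space, as a continuous linear map. -/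
noncomputable def adjCLM : (E →L[ℝ] E) →L[ℝ] (E →L[ℝ] E) :=
  LinearMap.mkContinuous
    { toFun := fun M => ContinuousLinearMap.adjoint M
      map_add' := fun M N => by simp [map_add]
      map_smul' := fun c M => by
        simp [LinearIsometryEquiv.map_smulₛₗ, starRingEnd_apply] }
    1 (fun M => by simp [LinearIsometryEquiv.norm_map])

@[simp] lemma adjCLM_apply (M : E →L[ℝ] E) :
    adjCLM E M = ContinuousLinearMap.adjoint M := rfl

end Adj

section Main

variable {E : Type*} [NormedAddCommGroup E] [InnerProductSpace ℝ E] [CompleteSpace E]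

theorem discrete_gradient_general
    (p : ℕ) (H : E → ℝ) (hH : ContDiff ℝ (p + 1) H) (g : E → E) (x : E)
    (hdg : ∀ y, ⟪g y, y - x⟫ = H y - H x) (hg : ContDiff ℝ p g)
    (k : ℕ) (hkp : k + 1 ≤ p) (v : E) :
    iteratedFDeriv ℝ (k + 1) g x (fun _ => v) =
      ((k : ℝ) + 1 + 1)⁻¹ • iteratedFDeriv ℝ (k + 1) (gradient H) x (fun _ => v)
        - (2 * ((k : ℝ) + 1) / ((k : ℝ) + 1 + 1)) •
          ((iteratedFDeriv ℝ k
            (fun y => (2 : ℝ)⁻¹ • (ContinuousLinearMap.adjoint (fderiv ℝ g y) - fderiv ℝ g y))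
            x (fun _ => v)) v) := by
  have hp1 : 1 ≤ p := le_trans (Nat.le_add_left 1 k) hkp
  have hcast : ((k + 1 : ℕ) : WithTop ℕ∞) ≤ (p : ℕ) := by exact_mod_cast hkp
  have hA : ContDiff ℝ k (fderiv ℝ g) := hg.fderiv_right (by exact_mod_cast hkp)
  have hgradC : ContDiff ℝ p (gradient H) := by
    have h1 : ContDiff ℝ p (fderiv ℝ H) := hH.fderiv_right le_rfl
    have h2 : gradient H = fun y => (InnerProductSpace.toDual ℝ E).symm (fderiv ℝ H y) := rfl
    rw [h2]
    exact (LinearIsometryEquiv.contDiff _).comp h1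
  -- Key pointwise identity obtained by differentiating the discrete gradient relation
  have hkey : ∀ y : E, gradient H y
      = (ContinuousLinearMap.adjoint (fderiv ℝ g y)) (y - x) + g y := by
    intro y
    have hHd : DifferentiableAt ℝ H y :=
      (hH.differentiable (by simp)).differentiableAt
    have hgd : HasFDerivAt g (fderiv ℝ g y) y :=
      ((hg.differentiable (by exact_mod_cast Nat.one_le_iff_ne_zero.mp hp1)).differentiableAt).hasFDerivAt
    have hid : HasFDerivAt (fun y' : E => y' - x) (ContinuousLinearMap.id ℝ E) y := by
      simpa using (hasFDerivAt_id y).sub_const x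
    have h1 := hgd.inner (𝕜 := ℝ) hid
    have h12 : (fun y' => ⟪g y', y' - x⟫) = fun y' => H y' - H x :=
      funext fun y' => hdg y'
    rw [h12] at h1
    have h2 : HasFDerivAt (fun y' => H y' - H x) (fderiv ℝ H y) y :=
      hHd.hasFDerivAt.sub_const (H x)
    have h3 := h2.unique h1
    refine ext_inner_right ℝ fun w => ?_
    have h4 : ⟪gradient H y, w⟫ = fderiv ℝ H y w := InnerProductSpace.toDual_symm_apply
    rw [h4, h3]
    simp only [ContinuousLinearMap.comp_apply, ContinuousLinearMap.prod_apply,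
      ContinuousLinearMap.coe_id', id_eq, fderivInnerCLM_apply, inner_add_left,
      ContinuousLinearMap.adjoint_inner_left]
    rw [real_inner_comm (y - x) ((fderiv ℝ g y) w)]
    ring
  set A : E → (E →L[ℝ] E) := fderiv ℝ g with hAdef
  set M : E →L[ℝ] E := iteratedFDeriv ℝ k A x (fun _ => v) with hMdef
  have hMv : M v = iteratedFDeriv ℝ (k + 1) g x (fun _ => v) := by
    rw [iteratedFDeriv_succ_apply_right]
    rfl
  -- the Q term
  set S : (E →L[ℝ] E) →L[ℝ] (E →L[ℝ] E) :=
    (2 : ℝ)⁻¹ • (adjCLM E - ContinuousLinearMap.id ℝ (E →L[ℝ] E)) with hSdef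
  have hQval : iteratedFDeriv ℝ k
      (fun y => (2 : ℝ)⁻¹ • (ContinuousLinearMap.adjoint (fderiv ℝ g y) - fderiv ℝ g y))
      x (fun _ => v) = (2 : ℝ)⁻¹ • (ContinuousLinearMap.adjoint M - M) := by
    have hfun : (fun y => (2 : ℝ)⁻¹ •
          (ContinuousLinearMap.adjoint (fderiv ℝ g y) - fderiv ℝ g y)) = ⇑S ∘ A := by
      funext y
      simp only [hSdef, Function.comp_apply, ContinuousLinearMap.smul_apply,
        ContinuousLinearMap.sub_apply, adjCLM_apply, ContinuousLinearMap.id_apply, hAdef]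
    rw [hfun, S.iteratedFDeriv_comp_left hA.contDiffAt le_rfl]
    simp only [hSdef, ContinuousLinearMap.compContinuousMultilinearMap_coe,
      Function.comp_apply, ContinuousLinearMap.smul_apply,
      ContinuousLinearMap.sub_apply, adjCLM_apply, ContinuousLinearMap.id_apply, ← hMdef]
  -- the function u along the line
  set T : (E →L[ℝ] E) →L[ℝ] E :=
    (ContinuousLinearMap.apply ℝ E v).comp (adjCLM E) with hTdef
  have huC : ContDiff ℝ k (fun y : E => (ContinuousLinearMap.adjoint (A y)) v) :=
    T.contDiff.comp hA
  have hT : iteratedFDeriv ℝ k (fun y : E => (ContinuousLinearMap.adjoint (A y)) v) x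
      (fun _ => v) = ContinuousLinearMap.adjoint M v := by
    rw [show (fun y : E => (ContinuousLinearMap.adjoint (A y)) v) = ⇑T ∘ A from rfl,
      T.iteratedFDeriv_comp_left hA.contDiffAt le_rfl]
    simp [hTdef]
    rfl
  have hLC : ∀ n : ℕ, ContDiff ℝ n (fun t : ℝ => x + t • v) := fun n =>
    contDiff_const.add (contDiff_id.smul contDiff_const)
  set u : ℝ → E := fun t : ℝ => (ContinuousLinearMap.adjoint (A (x + t • v))) v with hudef
  have huC' : ContDiff ℝ k u := huC.comp (hLC k)
  have hu0 : iteratedDeriv k u 0 = ContinuousLinearMap.adjoint M v := by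
    have h7 := iteratedDeriv_line k (fun y : E => (ContinuousLinearMap.adjoint (A y)) v) huC x v 0
    simp only [zero_smul, add_zero] at h7
    rw [hudef]
    rw [show (fun t : ℝ => (ContinuousLinearMap.adjoint (A (x + t • v))) v)
      = fun t : ℝ => (fun y : E => (ContinuousLinearMap.adjoint (A y)) v) (x + t • v) from rfl]
    rw [h7, hT]
  -- line identity
  have hw : (fun t : ℝ => gradient H (x + t • v) - g (x + t • v))
      = fun t : ℝ => t • u t := by
    funext t
    rw [hkey (x + t • v)]
    simp [hudef, add_sub_cancel_left, map_smul]
  have hgradk : ContDiff ℝ (k + 1) (fun t : ℝ => gradient H (x + t • v)) :=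
    (hgradC.of_le hcast).comp (hLC (k + 1))
  have hgk : ContDiff ℝ (k + 1) (fun t : ℝ => g (x + t • v)) :=
    (hg.of_le hcast).comp (hLC (k + 1))
  have hmain : iteratedFDeriv ℝ (k + 1) (gradient H) x (fun _ => v)
        - iteratedFDeriv ℝ (k + 1) g x (fun _ => v)
      = ((k : ℝ) + 1) • (ContinuousLinearMap.adjoint M v) := by
    have h1 := iteratedDeriv_sub_aux (n := k + 1) hgradk hgk 0
    rw [hw] at h1
    rw [iteratedDeriv_id_smul_top k u huC', hu0] at h1
    have h2 := iteratedDeriv_line (k + 1) (gradient H) (hgradC.of_le hcast) x v 0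
    have h3 := iteratedDeriv_line (k + 1) g (hg.of_le hcast) x v 0
    simp only [zero_smul, add_zero] at h2 h3
    rw [h2, h3] at h1
    exact h1.symm
  set G : E := iteratedFDeriv ℝ (k + 1) g x (fun _ => v) with hGdef
  set Hv : E := iteratedFDeriv ℝ (k + 1) (gradient H) x (fun _ => v) with hHvdef
  set Qv : E := (iteratedFDeriv ℝ k
      (fun y => (2 : ℝ)⁻¹ • (ContinuousLinearMap.adjoint (fderiv ℝ g y) - fderiv ℝ g y))
      x (fun _ => v)) v with hQvdef
  have hQv : Qv = (2 : ℝ)⁻¹ • (ContinuousLinearMap.adjoint M v - M v) := by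
    rw [hQvdef, hQval]
    simp [ContinuousLinearMap.smul_apply, ContinuousLinearMap.sub_apply]
  have hadj : ContinuousLinearMap.adjoint M v = G + (2 : ℝ) • Qv := by
    rw [hQv, hMv]
    module
  have hHveq : Hv = ((k : ℝ) + 2) • G + (2 * (k : ℝ) + 2) • Qv := by
    have h5 : Hv - G = ((k : ℝ) + 1) • (G + (2 : ℝ) • Qv) := by
      rw [← hadj]
      exact hmain
    have h6 : Hv = G + ((k : ℝ) + 1) • (G + (2 : ℝ) • Qv) := by
      rw [← h5]; abel
    rw [h6]; module
  rw [hHveq]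
  have h2 : (k : ℝ) + 1 + 1 ≠ 0 := by positivity
  match_scalars <;> (field_simp; try ring)

end Main

/-- **Lemma 2.** For `1 ≤ κ ≤ p`, a `C^{p+1}` function `H` and a `C^p` (in the
second argument) discrete gradient,
`D₂^κ∇̄H(x,x)v^κ = (1/(κ+1)) D^κ∇H(x)v^κ − (2κ/(κ+1)) D₂^{κ−1}Q(x,x)v^κ`. -/
theorem discrete_gradient_higher_derivatives_via_Q
    (d p : ℕ) (H : EuclideanSpace ℝ (Fin d) → ℝ) (hH : ContDiff ℝ (p + 1) H)
    (dg : EuclideanSpace ℝ (Fin d) → EuclideanSpace ℝ (Fin d) → EuclideanSpace ℝ (Fin d))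
    (hdg : ∀ x y, ⟪dg x y, y - x⟫ = H y - H x)
    (hdgp : ∀ x, ContDiff ℝ p (dg x))
    (κ : ℕ) (hκ1 : 1 ≤ κ) (hκp : κ ≤ p) :
    ∀ (x v : EuclideanSpace ℝ (Fin d)),
      iteratedFDeriv ℝ κ (dg x) x (fun _ => v) =
        ((κ : ℝ) + 1)⁻¹ • iteratedFDeriv ℝ κ (gradient H) x (fun _ => v)
          - (2 * (κ : ℝ) / ((κ : ℝ) + 1)) •
            ((iteratedFDeriv ℝ (κ - 1) (fun y => dgQ dg x y) x (fun _ => v)) v) := by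
  intro x v
  obtain ⟨k, rfl⟩ : ∃ k, κ = k + 1 := ⟨κ - 1, (Nat.succ_pred_eq_of_pos hκ1).symm⟩
  have h := discrete_gradient_general p H hH (dg x) x (fun y => hdg x y) (hdgp x) k hκp v
  have hQ : (fun y => dgQ dg x y) = fun y =>
      (2 : ℝ)⁻¹ • (ContinuousLinearMap.adjoint (fderiv ℝ (dg x) y) - fderiv ℝ (dg x) y) := rfl
  rw [hQ]
  push_cast
  exact h
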